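/- Let D = {x ∈ ℝ³ : x₃ > 0} and let u : ℝ³ → ℝ³ be C³ up to the boundary, divergence-free, with u(x) = 0 for all x with x₃ = 0. Let ω = ∇∧u and θ(x₁,x₂) = ω(x₁,x₂,0). Then at every boundary point, ∂²ω¹/∂x₃² = − ∂³u²/∂x₃³ + Δ_Γ θ¹ − ∂/∂x₁ (∇^Γ·θ). -/

import Mathlib

/-- Partial derivative of a scalar field on `ℝⁿ` in the `i`-th coordinate direction. -/
noncomputable def pd {n : ℕ} (i : Fin n) (f : (Fin n → ℝ) → ℝ) (x : Fin n → ℝ) : ℝ :=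
  fderiv ℝ f x (Pi.single i 1)

/-- The curl (vorticity) `ω = ∇ ∧ u` of a vector field on `ℝ³`. -/
noncomputable def curl3 (u : (Fin 3 → ℝ) → Fin 3 → ℝ) (x : Fin 3 → ℝ) : Fin 3 → ℝ :=
  ![pd 1 (fun y => u y 2) x - pd 2 (fun y => u y 1) x,
    pd 2 (fun y => u y 0) x - pd 0 (fun y => u y 2) x,
    pd 0 (fun y => u y 1) x - pd 1 (fun y => u y 0) x]

/-- The boundary vorticity `θ(x₁,x₂) = ω(x₁,x₂,0)` as a field on `∂D = ℝ²`. -/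
noncomputable def bdryVort (u : (Fin 3 → ℝ) → Fin 3 → ℝ) (p : Fin 2 → ℝ) : Fin 3 → ℝ :=
  curl3 u ![p 0, p 1, 0]

lemma pd_sub {n : ℕ} {f g : (Fin n → ℝ) → ℝ} {x : Fin n → ℝ} (i : Fin n)
    (hf : DifferentiableAt ℝ f x) (hg : DifferentiableAt ℝ g x) :
    pd i (fun y => f y - g y) x = pd i f x - pd i g x := by
  simp [pd, fderiv_fun_sub hf hg]

lemma pd_add {n : ℕ} {f g : (Fin n → ℝ) → ℝ} {x : Fin n → ℝ} (i : Fin n)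
    (hf : DifferentiableAt ℝ f x) (hg : DifferentiableAt ℝ g x) :
    pd i (fun y => f y + g y) x = pd i f x + pd i g x := by
  simp [pd, fderiv_fun_add hf hg]

lemma pd_const {n : ℕ} (i : Fin n) (c : ℝ) : pd i (fun _ => c) = fun _ => 0 := by
  funext x; simp [pd]

lemma contDiff_pd {n : ℕ} {N M : WithTop ℕ∞} {f : (Fin n → ℝ) → ℝ} (i : Fin n)
    (hf : ContDiff ℝ N f) (h : M + 1 ≤ N) : ContDiff ℝ M (pd i f) :=
  (hf.fderiv_right h).clm_apply contDiff_const

lemma pd_comm {n : ℕ} {f : (Fin n → ℝ) → ℝ} (hf : ContDiff ℝ 2 f) (i j : Fin n)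
    (x : Fin n → ℝ) : pd i (pd j f) x = pd j (pd i f) x := by
  have hdf : ContDiff ℝ 1 (fderiv ℝ f) := hf.fderiv_right (by norm_num)
  have hdx : DifferentiableAt ℝ (fderiv ℝ f) x := hdf.differentiable (by norm_num) x
  have hsym := second_derivative_symmetric (f := f) (f' := fderiv ℝ f)
    (f'' := fderiv ℝ (fderiv ℝ f) x) (x := x)
    (fun y => (hf.differentiable (by norm_num) y).hasFDerivAt) hdx.hasFDerivAt
  have comp : ∀ (v : Fin n → ℝ) (y : Fin n → ℝ), DifferentiableAt ℝ (fderiv ℝ f) y →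
      fderiv ℝ (fun z => fderiv ℝ f z v) y = (fderiv ℝ (fderiv ℝ f) y).flip v := by
    intro v y hy
    rw [fderiv_clm_apply hy (differentiableAt_const v)]
    simp
  show fderiv ℝ (fun z => fderiv ℝ f z (Pi.single j 1)) x (Pi.single i 1)
      = fderiv ℝ (fun z => fderiv ℝ f z (Pi.single i 1)) x (Pi.single j 1)
  rw [comp _ _ hdx, comp _ _ hdx]
  exact hsym _ _

noncomputable def incl : (Fin 2 → ℝ) →L[ℝ] (Fin 3 → ℝ) :=
  ContinuousLinearMap.pi ![ContinuousLinearMap.proj 0, ContinuousLinearMap.proj 1, 0]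

lemma incl_apply (p : Fin 2 → ℝ) : incl p = ![p 0, p 1, 0] := by
  funext i; fin_cases i <;> rfl

lemma incl_single (j : Fin 2) : incl (Pi.single j 1) = Pi.single j.castSucc 1 := by
  fin_cases j <;> (funext i; fin_cases i <;> simp [incl_apply])

lemma pd_comp_incl (j : Fin 2) (f : (Fin 3 → ℝ) → ℝ) (p : Fin 2 → ℝ)
    (hf : DifferentiableAt ℝ f (incl p)) :
    pd j (fun q => f (incl q)) p = pd j.castSucc f (incl p) := by
  have h : fderiv ℝ (fun q => f (incl q)) p
      = (fderiv ℝ f (incl p)).comp (incl : (Fin 2 → ℝ) →L[ℝ] (Fin 3 → ℝ)) :=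
    (hf.hasFDerivAt.comp p incl.hasFDerivAt).fderiv
  simp only [pd, h, ContinuousLinearMap.comp_apply, ContinuousLinearMap.coe_coe, incl_single]

lemma pd2_comp_incl (i j : Fin 2) (f : (Fin 3 → ℝ) → ℝ) (hf : ContDiff ℝ 2 f)
    (p : Fin 2 → ℝ) :
    pd i (pd j (fun q => f (incl q))) p = pd i.castSucc (pd j.castSucc f) (incl p) := by
  have h1 : pd j (fun q => f (incl q)) = fun q => pd j.castSucc f (incl q) :=
    funext fun q => pd_comp_incl j f q (hf.differentiable (by norm_num) _)
  rw [h1]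
  exact pd_comp_incl i _ p
    (((contDiff_pd _ hf (by norm_num) : ContDiff ℝ 1 _).differentiable (by norm_num)) _)

lemma tangential_zero (u : (Fin 3 → ℝ) → Fin 3 → ℝ) (hu : ContDiff ℝ 3 u)
    (hns : ∀ x : Fin 3 → ℝ, x 2 = 0 → u x = 0)
    (i j k : Fin 2) (m : Fin 3) (p : Fin 2 → ℝ) :
    pd i.castSucc (pd j.castSucc (pd k.castSucc (fun y => u y m))) (incl p) = 0 := by
  have hfm : ContDiff ℝ 3 (fun y => u y m) := contDiff_pi.1 hu m
  have h0 : (fun q => (fun y => u y m) (incl q)) = fun _ => (0:ℝ) := by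
    funext q
    have : u (incl q) = 0 := hns _ (by simp [incl_apply])
    simp [this]
  have h1 : (fun q => pd k.castSucc (fun y => u y m) (incl q)) = fun _ => (0:ℝ) := by
    funext q
    rw [← pd_comp_incl k _ q (hfm.differentiable (by norm_num) _), h0, pd_const]
  have h2 : (fun q => pd j.castSucc (pd k.castSucc (fun y => u y m)) (incl q))
      = fun _ => (0:ℝ) := by
    funext q
    rw [← pd_comp_incl j _ q
      (((contDiff_pd _ hfm (by norm_num) : ContDiff ℝ 2 _).differentiable (by norm_num)) _),
      h1, pd_const]
  rw [← pd_comp_incl i _ p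
      (((contDiff_pd _ (contDiff_pd _ hfm (by norm_num) : ContDiff ℝ 2 _) (by norm_num) :
        ContDiff ℝ 1 _).differentiable (by norm_num)) _),
    h2, pd_const]

/-- for a `C³`, divergence-free vector field `u` on the upper half space
vanishing on the boundary `{x₃ = 0}`, at every boundary point
`∂²ω¹/∂x₃² = − ∂³u²/∂x₃³ + Δ_Γ θ¹ − ∂/∂x₁(∇^Γ·θ)`, where `θ(x₁,x₂) = ω(x₁,x₂,0)`. -/
theorem second_normal_derivative_omega1
    (u : (Fin 3 → ℝ) → Fin 3 → ℝ)
    (hu : ContDiff ℝ 3 u)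
    (hdiv : ∀ x : Fin 3 → ℝ, ∑ i : Fin 3, pd i (fun y => u y i) x = 0)
    (hnoslip : ∀ x : Fin 3 → ℝ, x 2 = 0 → u x = 0) :
    ∀ x : Fin 3 → ℝ, x 2 = 0 →
      pd 2 (pd 2 (fun y => curl3 u y 0)) x
        = -(pd 2 (pd 2 (pd 2 (fun y => u y 1))) x)
          + (pd 0 (pd 0 (fun p => bdryVort u p 0)) ![x 0, x 1]
              + pd 1 (pd 1 (fun p => bdryVort u p 0)) ![x 0, x 1])
          - pd 0 (fun p => pd 0 (fun q => bdryVort u q 0) p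
              + pd 1 (fun q => bdryVort u q 1) p) ![x 0, x 1] := by
  intro x hx
  have hC3 : ∀ m : Fin 3, ContDiff ℝ 3 (fun y => u y m) := fun m => contDiff_pi.1 hu m
  have hC2 : ∀ m : Fin 3, ContDiff ℝ 2 (fun y => u y m) := fun m => (hC3 m).of_le (by norm_num)
  have hCd1 : ∀ (k m : Fin 3), ContDiff ℝ 2 (pd k (fun y => u y m)) :=
    fun k m => contDiff_pd k (hC3 m) (by norm_num)
  have hCd2 : ∀ (j k m : Fin 3), ContDiff ℝ 1 (pd j (pd k (fun y => u y m))) :=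
    fun j k m => contDiff_pd j (hCd1 k m) (by norm_num)
  have hD1 : ∀ (k m : Fin 3) (y : Fin 3 → ℝ), DifferentiableAt ℝ (pd k (fun y => u y m)) y :=
    fun k m y => (hCd1 k m).differentiable (by norm_num) y
  have hD2 : ∀ (j k m : Fin 3) (y : Fin 3 → ℝ),
      DifferentiableAt ℝ (pd j (pd k (fun y => u y m))) y :=
    fun j k m y => (hCd2 j k m).differentiable (by norm_num) y
  -- curl components as functions
  have hω0 : (fun y => curl3 u y 0)
      = fun y => pd 1 (fun z => u z 2) y - pd 2 (fun z => u z 1) y := by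
    funext y; simp [curl3]
  have hω1 : (fun y => curl3 u y 1)
      = fun y => pd 2 (fun z => u z 0) y - pd 0 (fun z => u z 2) y := by
    funext y; simp [curl3]
  have hω0C : ContDiff ℝ 2 (fun y => curl3 u y 0) := by
    rw [hω0]; exact (hCd1 1 2).sub (hCd1 2 1)
  have hω1C : ContDiff ℝ 2 (fun y => curl3 u y 1) := by
    rw [hω1]; exact (hCd1 2 0).sub (hCd1 0 2)
  -- expansion of second derivatives of curl components
  have hexp0 : ∀ (i j : Fin 3) (y : Fin 3 → ℝ), pd i (pd j (fun y => curl3 u y 0)) y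
      = pd i (pd j (pd 1 (fun z => u z 2))) y - pd i (pd j (pd 2 (fun z => u z 1))) y := by
    intro i j y
    have h1 : pd j (fun y => curl3 u y 0)
        = fun y => pd j (pd 1 (fun z => u z 2)) y - pd j (pd 2 (fun z => u z 1)) y := by
      rw [hω0]; funext z; exact pd_sub j (hD1 1 2 z) (hD1 2 1 z)
    rw [h1]; exact pd_sub i (hD2 j 1 2 y) (hD2 j 2 1 y)
  have hexp1 : ∀ (i j : Fin 3) (y : Fin 3 → ℝ), pd i (pd j (fun y => curl3 u y 1)) y
      = pd i (pd j (pd 2 (fun z => u z 0))) y - pd i (pd j (pd 0 (fun z => u z 2))) y := by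
    intro i j y
    have h1 : pd j (fun y => curl3 u y 1)
        = fun y => pd j (pd 2 (fun z => u z 0)) y - pd j (pd 0 (fun z => u z 2)) y := by
      rw [hω1]; funext z; exact pd_sub j (hD1 2 0 z) (hD1 0 2 z)
    rw [h1]; exact pd_sub i (hD2 j 2 0 y) (hD2 j 0 2 y)
  -- boundary identification
  have hincl : incl ![x 0, x 1] = x := by
    rw [incl_apply]; funext i; fin_cases i <;> simp [hx]
  have hθ0 : (fun p => bdryVort u p 0) = fun q => (fun y => curl3 u y 0) (incl q) := by
    funext q; simp [bdryVort, incl_apply]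
  have hθ1 : (fun p => bdryVort u p 1) = fun q => (fun y => curl3 u y 1) (incl q) := by
    funext q; simp [bdryVort, incl_apply]
  have hB1 : pd 0 (pd 0 (fun p => bdryVort u p 0)) ![x 0, x 1]
      = pd 0 (pd 0 (fun y => curl3 u y 0)) x := by
    rw [hθ0, pd2_comp_incl 0 0 _ hω0C, hincl]
    simp
  have hB2 : pd 1 (pd 1 (fun p => bdryVort u p 0)) ![x 0, x 1]
      = pd 1 (pd 1 (fun y => curl3 u y 0)) x := by
    rw [hθ0, pd2_comp_incl 1 1 _ hω0C, hincl]
    simp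
  -- third term
  have hfun : (fun p => pd 0 (fun q => bdryVort u q 0) p + pd 1 (fun q => bdryVort u q 1) p)
      = fun p => pd 0 (fun y => curl3 u y 0) (incl p) + pd 1 (fun y => curl3 u y 1) (incl p) := by
    funext p
    rw [hθ0, hθ1, pd_comp_incl 0 _ p (hω0C.differentiable (by norm_num) _),
      pd_comp_incl 1 _ p (hω1C.differentiable (by norm_num) _)]
    rfl
  have hDω0 : Differentiable ℝ (pd 0 (fun y => curl3 u y 0)) :=
    (contDiff_pd 0 hω0C (by norm_num) : ContDiff ℝ 1 _).differentiable (by norm_num)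
  have hDω1 : Differentiable ℝ (pd 1 (fun y => curl3 u y 1)) :=
    (contDiff_pd 1 hω1C (by norm_num) : ContDiff ℝ 1 _).differentiable (by norm_num)
  have hB3 : pd 0 (fun p => pd 0 (fun q => bdryVort u q 0) p
        + pd 1 (fun q => bdryVort u q 1) p) ![x 0, x 1]
      = pd 0 (pd 0 (fun y => curl3 u y 0)) x + pd 0 (pd 1 (fun y => curl3 u y 1)) x := by
    have d0 : DifferentiableAt ℝ (fun p => pd 0 (fun y => curl3 u y 0) (incl p)) ![x 0, x 1] :=
      (hDω0 _).comp _ incl.differentiable.differentiableAt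
    have d1 : DifferentiableAt ℝ (fun p => pd 1 (fun y => curl3 u y 1) (incl p)) ![x 0, x 1] :=
      (hDω1 _).comp _ incl.differentiable.differentiableAt
    rw [hfun, pd_add 0 d0 d1,
      pd_comp_incl 0 _ _ (hDω0 _), pd_comp_incl 0 _ _ (hDω1 _), hincl]
    simp
  rw [hB1, hB2, hB3, hexp0 2 2 x, hexp0 0 0 x, hexp0 1 1 x, hexp1 0 1 x]
  -- tangential derivative facts
  have p2 : incl ![x 0, x 1] = x := hincl
  have ht1 : pd 1 (pd 1 (pd 1 (fun z => u z 2))) x = 0 := by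
    rw [← p2]
    simpa using tangential_zero u hu hnoslip 1 1 1 2 ![x 0, x 1]
  have ht2 : pd 0 (pd 1 (pd 0 (fun z => u z 2))) x = 0 := by
    rw [← p2]
    simpa using tangential_zero u hu hnoslip 0 1 0 2 ![x 0, x 1]
  -- divergence fact
  have hdivf : (fun y => pd 0 (fun z => u z 0) y + pd 1 (fun z => u z 1) y
      + pd 2 (fun z => u z 2) y) = fun _ => (0:ℝ) := by
    funext y; simpa [Fin.sum_univ_three] using hdiv y
  have s1 : pd 2 (fun y => pd 0 (fun z => u z 0) y + pd 1 (fun z => u z 1) y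
        + pd 2 (fun z => u z 2) y)
      = fun y => pd 2 (pd 0 (fun z => u z 0)) y + pd 2 (pd 1 (fun z => u z 1)) y
        + pd 2 (pd 2 (fun z => u z 2)) y := by
    funext y
    rw [pd_add 2 ((hD1 0 0 y).fun_add (hD1 1 1 y)) (hD1 2 2 y),
      pd_add 2 (hD1 0 0 y) (hD1 1 1 y)]
  have e1 : (fun y => pd 2 (pd 0 (fun z => u z 0)) y + pd 2 (pd 1 (fun z => u z 1)) y
      + pd 2 (pd 2 (fun z => u z 2)) y) = fun _ => (0:ℝ) := by
    rw [← s1, hdivf, pd_const]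
  have hdivkey : pd 1 (pd 2 (pd 0 (fun z => u z 0))) x + pd 1 (pd 2 (pd 1 (fun z => u z 1))) x
      + pd 1 (pd 2 (pd 2 (fun z => u z 2))) x = 0 := by
    have e3 : pd 1 (fun y => pd 2 (pd 0 (fun z => u z 0)) y + pd 2 (pd 1 (fun z => u z 1)) y
        + pd 2 (pd 2 (fun z => u z 2)) y) x
        = pd 1 (pd 2 (pd 0 (fun z => u z 0))) x + pd 1 (pd 2 (pd 1 (fun z => u z 1))) x
          + pd 1 (pd 2 (pd 2 (fun z => u z 2))) x := by
      rw [pd_add 1 ((hD2 2 0 0 x).fun_add (hD2 2 1 1 x)) (hD2 2 2 2 x),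
        pd_add 1 (hD2 2 0 0 x) (hD2 2 1 1 x)]
    rw [← e3, e1, pd_const]
  -- commutation facts
  have innerswap : ∀ (a b c m : Fin 3), pd a (pd b (pd c (fun z => u z m))) x
      = pd a (pd c (pd b (fun z => u z m))) x := by
    intro a b c m
    have h : pd b (pd c (fun z => u z m)) = pd c (pd b (fun z => u z m)) :=
      funext fun y => pd_comm (hC2 m) b c y
    rw [h]
  have outerswap : ∀ (a b c m : Fin 3), pd a (pd b (pd c (fun z => u z m))) x
      = pd b (pd a (pd c (fun z => u z m))) x := fun a b c m => pd_comm (hCd1 c m) a b x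
  have c1 : pd 2 (pd 2 (pd 1 (fun z => u z 2))) x = pd 1 (pd 2 (pd 2 (fun z => u z 2))) x := by
    rw [innerswap 2 2 1 2, outerswap 2 1 2 2]
  have c2 : pd 1 (pd 1 (pd 2 (fun z => u z 1))) x = pd 1 (pd 2 (pd 1 (fun z => u z 1))) x :=
    innerswap 1 1 2 1
  have c3 : pd 0 (pd 1 (pd 2 (fun z => u z 0))) x = pd 1 (pd 2 (pd 0 (fun z => u z 0))) x := by
    rw [outerswap 0 1 2 0, innerswap 1 0 2 0]
  linarith
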